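/- Let $h \in L^2(Q_{\ell,T};\mathbb{R}^d)$ for some $\ell, T > 0$. For $t \in (0,T]$ let $\overline{h}_t(x') = \frac{1}{t}\int_0^t h(x',s)\,ds$. Then the map $t \mapsto \frac{t^2}{\ell^2} \fint_{Q_{\ell,t}} |h - \overline{h}_t|^2\,dx$ is non-decreasing on $(0,T]$. -/

import Mathlib

open MeasureTheory Set

section Aux

variable {E : Type*} [NormedAddCommGroup E] [InnerProductSpace ℝ E] [CompleteSpace E]

local notation "⟪" x ", " y "⟫" => @inner ℝ _ _ x y

lemma my_double_integral (g : ℝ → E) (hg : Continuous g) {t : ℝ} (ht : 0 ≤ t) :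
    ∫ u in Icc (0:ℝ) t, ∫ v in Icc (0:ℝ) t, ‖g u - g v‖^2
      = 2 * (t * (∫ u in Icc (0:ℝ) t, ‖g u‖^2) - ‖∫ u in Icc (0:ℝ) t, g u‖^2) := by
  have hgI : IntegrableOn g (Icc (0:ℝ) t) := hg.integrableOn_Icc
  have hg2 : IntegrableOn (fun u => ‖g u‖^2) (Icc (0:ℝ) t) :=
    ((hg.norm.pow 2)).integrableOn_Icc
  set G := ∫ u in Icc (0:ℝ) t, g u with hGdef
  set A := ∫ u in Icc (0:ℝ) t, ‖g u‖^2 with hAdef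
  have hvol : (volume (Icc (0:ℝ) t)).toReal = t := by
    rw [Real.volume_Icc]; simp [ht]
  have hIc : ∀ c : E, IntegrableOn (fun v => ⟪c, g v⟫) (Icc (0:ℝ) t) := fun c =>
    hgI.const_inner c
  have inner_eq : ∀ u : ℝ, (∫ v in Icc (0:ℝ) t, ‖g u - g v‖^2)
      = t * ‖g u‖^2 - 2 * ⟪g u, G⟫ + A := by
    intro u
    have h1 : (fun v => ‖g u - g v‖^2)
        = fun v => (‖g u‖^2 - 2 * ⟪g u, g v⟫) + ‖g v‖^2 := by
      funext v; rw [norm_sub_sq_real]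
    have hIconst : IntegrableOn (fun _ : ℝ => ‖g u‖^2) (Icc (0:ℝ) t) :=
      integrableOn_const (by simp [Real.volume_Icc])
    have hI2 : IntegrableOn (fun v => 2 * ⟪g u, g v⟫) (Icc (0:ℝ) t) :=
      (hIc (g u)).const_mul 2
    have hI3 : IntegrableOn (fun v => ‖g u‖^2 - 2 * ⟪g u, g v⟫) (Icc (0:ℝ) t) :=
      hIconst.sub hI2
    rw [h1, integral_add hI3 hg2, integral_sub hIconst hI2,
      setIntegral_const, MeasureTheory.integral_const_mul, integral_inner hgI, measureReal_def, hvol]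
    simp [smul_eq_mul, hGdef, hAdef]
  calc (∫ u in Icc (0:ℝ) t, ∫ v in Icc (0:ℝ) t, ‖g u - g v‖^2)
      = ∫ u in Icc (0:ℝ) t, (t * ‖g u‖^2 - 2 * ⟪g u, G⟫ + A) := by
        exact integral_congr_ae (Filter.Eventually.of_forall fun u => inner_eq u)
    _ = 2 * (t * A - ‖G‖^2) := by
        have hIconst : IntegrableOn (fun _ : ℝ => A) (Icc (0:ℝ) t) :=
          integrableOn_const (by simp [Real.volume_Icc])
        have hIa : IntegrableOn (fun u => t * ‖g u‖^2) (Icc (0:ℝ) t) := hg2.const_mul t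
        have hIb : IntegrableOn (fun u => 2 * ⟪g u, G⟫) (Icc (0:ℝ) t) :=
          (hgI.inner_const G).const_mul 2
        have hIab : IntegrableOn (fun u => t * ‖g u‖^2 - 2 * ⟪g u, G⟫) (Icc (0:ℝ) t) :=
          hIa.sub hIb
        rw [integral_add hIab hIconst, integral_sub hIa hIb,
          MeasureTheory.integral_const_mul, MeasureTheory.integral_const_mul, setIntegral_const, measureReal_def, hvol]
        have : (∫ u in Icc (0:ℝ) t, ⟪g u, G⟫) = ‖G‖^2 := by
          have : (fun u => ⟪g u, G⟫) = fun u => ⟪G, g u⟫ := by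
            funext u; exact real_inner_comm _ _
          rw [this, integral_inner hgI, ← hGdef, real_inner_self_eq_norm_sq]
        rw [this]; ring_nf; rw [← hAdef]; ring


lemma my_phi_mono (g : ℝ → E) (hg : Continuous g) {s t : ℝ} (hs : 0 ≤ s) (hst : s ≤ t) :
    s * (∫ u in Icc (0:ℝ) s, ‖g u‖^2) - ‖∫ u in Icc (0:ℝ) s, g u‖^2
      ≤ t * (∫ u in Icc (0:ℝ) t, ‖g u‖^2) - ‖∫ u in Icc (0:ℝ) t, g u‖^2 := by
  have ht : 0 ≤ t := hs.trans hst
  have hsub : Icc (0:ℝ) s ⊆ Icc (0:ℝ) t := Icc_subset_Icc_right hst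
  set f : ℝ → ℝ → ℝ := fun u v => ‖g u - g v‖^2 with hf
  have hfc : Continuous (Function.uncurry f) := by
    apply Continuous.pow
    exact ((hg.comp continuous_fst).sub (hg.comp continuous_snd)).norm
  have hFc : Continuous fun u => ∫ v in Icc (0:ℝ) t, f u v :=
    continuous_parametric_integral_of_continuous hfc isCompact_Icc
  have hFsc : Continuous fun u => ∫ v in Icc (0:ℝ) s, f u v :=
    continuous_parametric_integral_of_continuous hfc isCompact_Icc
  have hFI : IntegrableOn (fun u => ∫ v in Icc (0:ℝ) t, f u v) (Icc (0:ℝ) t) :=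
    hFc.integrableOn_Icc
  have hFsI : IntegrableOn (fun u => ∫ v in Icc (0:ℝ) s, f u v) (Icc (0:ℝ) s) :=
    hFsc.integrableOn_Icc
  have key : (∫ u in Icc (0:ℝ) s, ∫ v in Icc (0:ℝ) s, f u v)
      ≤ ∫ u in Icc (0:ℝ) t, ∫ v in Icc (0:ℝ) t, f u v := by
    have step1 : (∫ u in Icc (0:ℝ) s, ∫ v in Icc (0:ℝ) s, f u v)
        ≤ ∫ u in Icc (0:ℝ) s, ∫ v in Icc (0:ℝ) t, f u v := by
      refine setIntegral_mono_on hFsI (hFI.mono_set hsub)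
        measurableSet_Icc fun u _ => ?_
      have hfuI : IntegrableOn (fun v => f u v) (Icc (0:ℝ) t) := by
        have : Continuous fun v => f u v := by
          apply Continuous.pow
          exact (continuous_const.sub hg).norm
        exact this.integrableOn_Icc
      exact setIntegral_mono_set hfuI
        (Filter.Eventually.of_forall fun v => sq_nonneg _)
        (HasSubset.Subset.eventuallyLE hsub)
    have step2 : (∫ u in Icc (0:ℝ) s, ∫ v in Icc (0:ℝ) t, f u v)
        ≤ ∫ u in Icc (0:ℝ) t, ∫ v in Icc (0:ℝ) t, f u v :=
      setIntegral_mono_set hFI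
        (Filter.Eventually.of_forall fun u => integral_nonneg fun v => sq_nonneg _)
        (HasSubset.Subset.eventuallyLE hsub)
    exact step1.trans step2
  have h1 := my_double_integral g hg hs
  have h2 := my_double_integral g hg ht
  rw [hf] at key
  linarith

lemma my_inner_expand (g : ℝ → E) (hg : Continuous g) {t : ℝ} (ht : 0 < t) :
    (∫ u in Icc (0:ℝ) t, ‖g u - t⁻¹ • ∫ v in Icc (0:ℝ) t, g v‖^2)
      = (∫ u in Icc (0:ℝ) t, ‖g u‖^2) - t⁻¹ * ‖∫ v in Icc (0:ℝ) t, g v‖^2 := by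
  have hgI : IntegrableOn g (Icc (0:ℝ) t) := hg.integrableOn_Icc
  have hg2 : IntegrableOn (fun u => ‖g u‖^2) (Icc (0:ℝ) t) :=
    ((hg.norm.pow 2)).integrableOn_Icc
  set G := ∫ u in Icc (0:ℝ) t, g u with hGdef
  set c : E := t⁻¹ • G with hcdef
  have hvol : (volume (Icc (0:ℝ) t)).toReal = t := by
    rw [Real.volume_Icc]; simp [ht.le]
  have h1 : (fun u => ‖g u - c‖^2)
      = fun u => (‖g u‖^2 - 2 * ⟪g u, c⟫) + ‖c‖^2 := by
    funext u; rw [norm_sub_sq_real]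
  have hIb : IntegrableOn (fun u => 2 * ⟪g u, c⟫) (Icc (0:ℝ) t) :=
    (hgI.inner_const c).const_mul 2
  have hIa : IntegrableOn (fun u => ‖g u‖^2 - 2 * ⟪g u, c⟫) (Icc (0:ℝ) t) :=
    hg2.sub hIb
  have hIconst : IntegrableOn (fun _ : ℝ => ‖c‖^2) (Icc (0:ℝ) t) :=
    integrableOn_const (by simp [Real.volume_Icc])
  have hinner : (∫ u in Icc (0:ℝ) t, ⟪g u, c⟫) = t⁻¹ * ‖G‖^2 := by
    have e1 : (fun u => ⟪g u, c⟫) = fun u => ⟪c, g u⟫ := by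
      funext u; exact real_inner_comm _ _
    rw [e1, integral_inner hgI, ← hGdef, hcdef, real_inner_smul_left,
      real_inner_self_eq_norm_sq]
  have hnc : ‖c‖^2 = t⁻¹^2 * ‖G‖^2 := by
    rw [hcdef, norm_smul, mul_pow]
    congr 1
    rw [Real.norm_eq_abs, sq_abs]
  rw [h1, integral_add hIa hIconst, integral_sub hg2 hIb,
    MeasureTheory.integral_const_mul, hinner, setIntegral_const, measureReal_def, hvol, smul_eq_mul, hnc]
  field_simp
  ring

end Aux

/-- **Monotonicity formula.** For `h ∈ L²(Q_{ℓ,T};ℝ^d)` (continuous, so that vertical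
traces are defined), the map `t ↦ (t²/ℓ²) ⨍_{Q_{ℓ,t}} |h - h̄_t|²` is non-decreasing on `(0,T]`. -/
theorem stmt_1 (d : ℕ) (ℓ T : ℝ) (hℓ : 0 < ℓ) (hT : 0 < T)
    (h : (Fin d → ℝ) → ℝ → EuclideanSpace ℝ (Fin d))
    (hcont : Continuous (Function.uncurry h))
    (hL2 : MemLp (fun x : (Fin d → ℝ) × ℝ => h x.1 x.2) 2
      (volume.restrict ((Set.Icc (fun _ : Fin d => -ℓ) (fun _ => ℓ)) ×ˢ Set.Icc (0:ℝ) T))) :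
    MonotoneOn (fun t : ℝ =>
      (t^2 / ℓ^2) *
        ⨍ x in (Set.Icc (fun _ : Fin d => -ℓ) (fun _ => ℓ)) ×ˢ Set.Icc (0:ℝ) t,
          ‖h x.1 x.2 - t⁻¹ • ∫ s in Set.Icc (0:ℝ) t, h x.1 s‖^2)
      (Set.Ioc 0 T) := by
  set Q : Set (Fin d → ℝ) := Icc (fun _ : Fin d => -ℓ) (fun _ => ℓ) with hQ
  have hx' : ∀ x' : Fin d → ℝ, Continuous (h x') := fun x' =>
    hcont.comp (Continuous.prodMk_right x')
  have hA : ∀ t : ℝ, Continuous fun x' => ∫ s in Icc (0:ℝ) t, ‖h x' s‖^2 := by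
    intro t
    exact continuous_parametric_integral_of_continuous
      (f := fun x' s => ‖h x' s‖^2) (by apply Continuous.pow; exact hcont.norm) isCompact_Icc
  have hG : ∀ t : ℝ, Continuous fun x' => ∫ s in Icc (0:ℝ) t, h x' s := by
    intro t
    exact continuous_parametric_integral_of_continuous hcont isCompact_Icc
  have key : ∀ t ∈ Set.Ioc (0:ℝ) T,
      (t^2 / ℓ^2) * ⨍ x in Q ×ˢ Icc (0:ℝ) t,
          ‖h x.1 x.2 - t⁻¹ • ∫ s in Icc (0:ℝ) t, h x.1 s‖^2
      = ((2*ℓ)^d * ℓ^2)⁻¹ *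
        ∫ x' in Q, (t * (∫ s in Icc (0:ℝ) t, ‖h x' s‖^2)
          - ‖∫ s in Icc (0:ℝ) t, h x' s‖^2) := by
    intro t ht
    obtain ⟨ht0, htT⟩ := ht
    have hFcont : Continuous fun x : (Fin d → ℝ) × ℝ =>
        ‖h x.1 x.2 - t⁻¹ • ∫ s in Icc (0:ℝ) t, h x.1 s‖^2 := by
      apply Continuous.pow
      apply Continuous.norm
      exact hcont.sub (((hG t).comp continuous_fst).const_smul t⁻¹)
    have hcompact : IsCompact (Q ×ˢ Icc (0:ℝ) t) := isCompact_Icc.prod isCompact_Icc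
    have hFI : IntegrableOn (fun x : (Fin d → ℝ) × ℝ =>
        ‖h x.1 x.2 - t⁻¹ • ∫ s in Icc (0:ℝ) t, h x.1 s‖^2) (Q ×ˢ Icc (0:ℝ) t) :=
      hFcont.continuousOn.integrableOn_compact hcompact
    have hvol : (volume (Q ×ˢ Icc (0:ℝ) t)).toReal = (2*ℓ)^d * t := by
      rw [hQ, Measure.volume_eq_prod, Measure.prod_prod, Real.volume_Icc, Real.volume_Icc_pi]
      simp only [sub_neg_eq_add, sub_zero, Finset.prod_const, Finset.card_univ,
        Fintype.card_fin]
      rw [ENNReal.toReal_mul, ENNReal.toReal_pow,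
        ENNReal.toReal_ofReal (by linarith), ENNReal.toReal_ofReal ht0.le]
      ring_nf
    have hFI' : IntegrableOn (fun x : (Fin d → ℝ) × ℝ =>
        ‖h x.1 x.2 - t⁻¹ • ∫ s in Icc (0:ℝ) t, h x.1 s‖^2) (Q ×ˢ Icc (0:ℝ) t)
        ((volume : Measure (Fin d → ℝ)).prod (volume : Measure ℝ)) := by
      rwa [Measure.volume_eq_prod] at hFI
    rw [setAverage_eq, smul_eq_mul, measureReal_def, hvol, Measure.volume_eq_prod,
      MeasureTheory.setIntegral_prod _ hFI']
    have hinner : ∀ x' ∈ Q,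
        (∫ y in Icc (0:ℝ) t, ‖h x' y - t⁻¹ • ∫ s in Icc (0:ℝ) t, h x' s‖^2)
        = (∫ s in Icc (0:ℝ) t, ‖h x' s‖^2) - t⁻¹ * ‖∫ s in Icc (0:ℝ) t, h x' s‖^2 :=
      fun x' _ => my_inner_expand (h x') (hx' x') ht0
    rw [MeasureTheory.setIntegral_congr_fun measurableSet_Icc hinner]
    have hpull : (∫ x' in Q, ((∫ s in Icc (0:ℝ) t, ‖h x' s‖^2)
          - t⁻¹ * ‖∫ s in Icc (0:ℝ) t, h x' s‖^2))
        = t⁻¹ * ∫ x' in Q, (t * (∫ s in Icc (0:ℝ) t, ‖h x' s‖^2)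
          - ‖∫ s in Icc (0:ℝ) t, h x' s‖^2) := by
      rw [← MeasureTheory.integral_const_mul]
      apply integral_congr_ae
      filter_upwards with x'
      field_simp
    rw [hpull]
    have h2d : (0:ℝ) < (2*ℓ)^d := pow_pos (by linarith) d
    field_simp
  intro t₁ ht₁ t₂ ht₂ h12
  dsimp only
  rw [key t₁ ht₁, key t₂ ht₂]
  have hc : (0:ℝ) ≤ ((2*ℓ)^d * ℓ^2)⁻¹ :=
    inv_nonneg.2 (le_of_lt (mul_pos (pow_pos (by linarith) d) (pow_pos hℓ 2)))
  refine mul_le_mul_of_nonneg_left ?_ hc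
  have hint : ∀ t : ℝ, Continuous fun x' =>
      t * (∫ s in Icc (0:ℝ) t, ‖h x' s‖^2) - ‖∫ s in Icc (0:ℝ) t, h x' s‖^2 :=
    fun t => (continuous_const.mul (hA t)).sub ((hG t).norm.pow 2)
  refine setIntegral_mono_on
    ((hint t₁).continuousOn.integrableOn_compact isCompact_Icc)
    ((hint t₂).continuousOn.integrableOn_compact isCompact_Icc)
    measurableSet_Icc fun x' _ => ?_
  exact my_phi_mono (h x') (hx' x') ht₁.1.le h12
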